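/- Let R be a commutative ring and A a separable commutative R-algebra with separability idempotent e ∈ A ⊗[R] A. Then the kernel of the multiplication map μ : A ⊗[R] A → A is the principal ideal generated by 1 ⊗ 1 − e, so μ induces an isomorphism of R-algebras (A ⊗[R] A)/(1 ⊗ 1 − e) ≅ A, and A ⊗[R] A decomposes as a product of rings A ⊗[R] A ≅ A × A', where A' := (A ⊗[R] A)/(e) is a separable commutative A-algebra for the A-algebra structure through the left tensor factor, and the first projection of this decomposition corresponds to μ. -/

import Mathlib

open scoped TensorProduct

/-- `e : A ⊗[R] A` is a separability idempotent for the commutative `R`-algebra `A`: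
the multiplication map `μ : A ⊗[R] A → A` sends `e` to `1`, and
`(a ⊗ 1) * e = (1 ⊗ a) * e` for all `a : A`. -/
def IsSeparabilityIdempotent (R A : Type*) [CommRing R] [CommRing A] [Algebra R A]
    (e : A ⊗[R] A) : Prop :=
  Algebra.TensorProduct.lmul' (S := A) R e = 1 ∧
    ∀ a : A, (a ⊗ₜ[R] (1 : A)) * e = ((1 : A) ⊗ₜ[R] a) * e

set_option synthInstance.maxHeartbeats 1000000 in
set_option maxHeartbeats 1000000 in
/-- For a separable commutative `R`-algebra `A` with separability idempotent `e`, the kernel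
of the multiplication map `μ : A ⊗[R] A → A` is the principal ideal `(1 ⊗ 1 - e)`, so `μ`
induces an `R`-algebra isomorphism `(A ⊗[R] A)/(1 ⊗ 1 - e) ≅ A`, and `A ⊗[R] A` splits as a
product of rings `A × A'` with first projection `μ`, where `A' := (A ⊗[R] A)/(e)` is a
separable commutative `A`-algebra (via the left tensor factor). -/
theorem separable_mul_splits {R A : Type*} [CommRing R] [CommRing A] [Algebra R A]
    (e : A ⊗[R] A) (he : IsSeparabilityIdempotent R A e) :
    RingHom.ker (Algebra.TensorProduct.lmul' (S := A) R) =
        Ideal.span {(1 : A) ⊗ₜ[R] (1 : A) - e} ∧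
    (∃ φ : ((A ⊗[R] A) ⧸ Ideal.span {(1 : A) ⊗ₜ[R] (1 : A) - e}) ≃ₐ[R] A,
        ∀ x : A ⊗[R] A,
          φ (Ideal.Quotient.mk (Ideal.span {(1 : A) ⊗ₜ[R] (1 : A) - e}) x) =
            Algebra.TensorProduct.lmul' (S := A) R x) ∧
    (∃ ψ : (A ⊗[R] A) ≃+* A × ((A ⊗[R] A) ⧸ Ideal.span {e}),
        ∀ x : A ⊗[R] A, (ψ x).1 = Algebra.TensorProduct.lmul' (S := A) R x) ∧
    ∃ e' : ((A ⊗[R] A) ⧸ Ideal.span {e}) ⊗[A] ((A ⊗[R] A) ⧸ Ideal.span {e}),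
      IsSeparabilityIdempotent A ((A ⊗[R] A) ⧸ Ideal.span {e}) e' := by
  obtain ⟨hμe, hcomm⟩ := he
  set μ : A ⊗[R] A →ₐ[R] A := Algebra.TensorProduct.lmul' (S := A) R with hμdef
  -- key identity : x * e = (μ x ⊗ 1) * e
  have key : ∀ x : A ⊗[R] A, x * e = (μ x ⊗ₜ[R] (1 : A)) * e := by
    intro x
    induction x using TensorProduct.induction_on with
    | zero => simp
    | tmul a b =>
        have h1 : (a ⊗ₜ[R] b) = (a ⊗ₜ[R] (1 : A)) * ((1 : A) ⊗ₜ[R] b) := by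
          simp [Algebra.TensorProduct.tmul_mul_tmul]
        rw [h1, mul_assoc, ← hcomm b, ← mul_assoc,
          Algebra.TensorProduct.tmul_mul_tmul]
        simp [μ, Algebra.TensorProduct.lmul'_apply_tmul]
    | add x y hx hy =>
        rw [add_mul, hx, hy, map_add, TensorProduct.add_tmul, add_mul]
  have hid : e * e = e := by
    have h := key e
    rw [hμe, ← Algebra.TensorProduct.one_def, one_mul] at h
    exact h
  have hone : ((1 : A) ⊗ₜ[R] (1 : A) - e) + e = 1 := by
    rw [sub_add_cancel, Algebra.TensorProduct.one_def]
  have hμf : μ ((1 : A) ⊗ₜ[R] (1 : A) - e) = 0 := by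
    rw [map_sub, hμe]
    simp [μ, Algebra.TensorProduct.lmul'_apply_tmul]
  have hker : RingHom.ker μ = Ideal.span {(1 : A) ⊗ₜ[R] (1 : A) - e} := by
    apply le_antisymm
    · intro x hx
      have hx0 : μ x = 0 := hx
      have hxe : x * e = 0 := by
        rw [key x, hx0, TensorProduct.zero_tmul, zero_mul]
      have hxf : x = x * ((1 : A) ⊗ₜ[R] (1 : A) - e) := by
        calc x = x * 1 := (mul_one x).symm
          _ = x * (((1 : A) ⊗ₜ[R] (1 : A) - e) + e) := by rw [hone]
          _ = x * ((1 : A) ⊗ₜ[R] (1 : A) - e) + x * e := mul_add ..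
          _ = x * ((1 : A) ⊗ₜ[R] (1 : A) - e) := by rw [hxe, add_zero]
      rw [hxf]
      exact Ideal.mul_mem_left _ _ (Ideal.subset_span rfl)
    · rw [Ideal.span_le, Set.singleton_subset_iff]
      exact hμf
  have hsurj : Function.Surjective μ := fun a =>
    ⟨a ⊗ₜ[R] (1 : A), by simp [μ, Algebra.TensorProduct.lmul'_apply_tmul]⟩
  -- the algebra isomorphism φ
  let φ : ((A ⊗[R] A) ⧸ Ideal.span {(1 : A) ⊗ₜ[R] (1 : A) - e}) ≃ₐ[R] A :=
    (Ideal.quotientEquivAlgOfEq R hker.symm).trans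
      (Ideal.quotientKerAlgEquivOfSurjective hsurj)
  have hφ : ∀ x : A ⊗[R] A,
      φ (Ideal.Quotient.mk (Ideal.span {(1 : A) ⊗ₜ[R] (1 : A) - e}) x) = μ x := by
    intro x
    simp [φ, Ideal.quotientEquivAlgOfEq_mk,
      Ideal.quotientKerAlgEquivOfSurjective, Ideal.quotientKerAlgEquivOfRightInverse,
      RingHom.quotientKerEquivOfRightInverse]
    exact RingHom.kerLift_mk (μ : A ⊗[R] A →+* A) x
  refine ⟨hker, ⟨φ, hφ⟩, ?_, ?_⟩
  · -- the splitting ψ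
    have hcop : IsCoprime (Ideal.span {(1 : A) ⊗ₜ[R] (1 : A) - e})
        (Ideal.span {e} : Ideal (A ⊗[R] A)) :=
      Ideal.isCoprime_iff_exists.mpr
        ⟨_, Ideal.subset_span rfl, _, Ideal.subset_span rfl, hone⟩
    have hef : e * ((1 : A) ⊗ₜ[R] (1 : A) - e) = 0 := by
      rw [mul_sub, ← Algebra.TensorProduct.one_def, mul_one, hid, sub_self]
    have hinf : (Ideal.span {(1 : A) ⊗ₜ[R] (1 : A) - e} ⊓ Ideal.span {e} :
        Ideal (A ⊗[R] A)) = ⊥ := by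
      rw [eq_bot_iff]
      intro x hx
      obtain ⟨hxI, hxJ⟩ := Ideal.mem_inf.mp hx
      obtain ⟨c, hc⟩ := Ideal.mem_span_singleton'.mp hxI
      obtain ⟨d, hd⟩ := Ideal.mem_span_singleton'.mp hxJ
      have hxf : x * ((1 : A) ⊗ₜ[R] (1 : A) - e) = 0 := by
        rw [← hd, mul_assoc, hef, mul_zero]
      have hxe : x * e = 0 := by
        rw [← hc, mul_assoc, mul_comm ((1 : A) ⊗ₜ[R] (1 : A) - e) e, hef, mul_zero]
      have : x = 0 := by
        calc x = x * 1 := (mul_one x).symm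
          _ = x * (((1 : A) ⊗ₜ[R] (1 : A) - e) + e) := by rw [hone]
          _ = x * ((1 : A) ⊗ₜ[R] (1 : A) - e) + x * e := mul_add ..
          _ = 0 := by rw [hxe, hxf, add_zero]
      simp [this]
    refine ⟨((RingEquiv.quotientBot (A ⊗[R] A)).symm.trans
      ((Ideal.quotEquivOfEq hinf.symm).trans
        ((Ideal.quotientInfEquivQuotientProd _ _ hcop).trans
          (RingEquiv.prodCongr (φ : _ ≃+* A) (RingEquiv.refl _))))), ?_⟩
    intro x
    have h1 : (RingEquiv.quotientBot (A ⊗[R] A)).symm x =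
        Ideal.Quotient.mk ⊥ x := rfl
    have h2 : (Ideal.quotEquivOfEq hinf.symm) (Ideal.Quotient.mk ⊥ x) =
        Ideal.Quotient.mk _ x := rfl
    simp only [RingEquiv.coe_trans, Function.comp_apply, h1, h2,
      Ideal.quotientInfEquivQuotientProd_fst]
    simpa using hφ x
  · -- separability of A' over A
    set A' := (A ⊗[R] A) ⧸ Ideal.span {e} with hA'
    let qA : (A ⊗[R] A) →ₐ[A] A' := Ideal.Quotient.mkₐ A (Ideal.span {e})
    let f0 : A →ₐ[R] A' :=
      (Ideal.Quotient.mkₐ R (Ideal.span {e})).comp Algebra.TensorProduct.includeRight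
    let g1 : A →ₐ[R] A' ⊗[A] A' :=
      (Algebra.TensorProduct.includeLeft (S := R)).comp f0
    let g2 : A →ₐ[R] A' ⊗[A] A' :=
      ((Algebra.TensorProduct.includeRight (R := A) (A := A') (B := A')).restrictScalars R).comp f0
    let θ : (A ⊗[R] A) →ₐ[R] A' ⊗[A] A' :=
      Algebra.TensorProduct.lift g1 g2 fun x y => mul_comm (g1 x) (g2 y)
    have hθ : ∀ a b : A, θ (a ⊗ₜ[R] b) = f0 a ⊗ₜ[A] f0 b := by
      intro a b
      show g1 a * g2 b = _
      simp [θ, g1, g2, Algebra.TensorProduct.lift_tmul,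
        Algebra.TensorProduct.tmul_mul_tmul]
    refine ⟨θ e, ?_, ?_⟩
    · -- μ' (θ e) = 1
      have hμθ : ∀ x : A ⊗[R] A,
          Algebra.TensorProduct.lmul' (S := A') A (θ x) = f0 (μ x) := by
        intro x
        induction x using TensorProduct.induction_on with
        | zero => simp
        | tmul a b =>
            rw [hθ]
            simp [μ, Algebra.TensorProduct.lmul'_apply_tmul]
        | add x y hx hy => simp [map_add, hx, hy]
      rw [hμθ e, hμe, map_one]
    · -- the commuting condition
      intro a'
      obtain ⟨x, rfl⟩ := Ideal.Quotient.mk_surjective (I := Ideal.span {e}) a'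
      have hq : ∀ y : A ⊗[R] A, Ideal.Quotient.mk (Ideal.span {e}) y = qA y := fun _ => rfl
      rw [hq]
      -- generator case
      have hgen : ∀ a : A,
          (qA ((1 : A) ⊗ₜ[R] a) ⊗ₜ[A] (1 : A')) * θ e =
            ((1 : A') ⊗ₜ[A] qA ((1 : A) ⊗ₜ[R] a)) * θ e := by
        intro a
        have hL : θ (a ⊗ₜ[R] (1 : A)) = qA ((1 : A) ⊗ₜ[R] a) ⊗ₜ[A] (1 : A') := by
          rw [hθ, map_one]; rfl
        have hR : θ ((1 : A) ⊗ₜ[R] a) = (1 : A') ⊗ₜ[A] qA ((1 : A) ⊗ₜ[R] a) := by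
          rw [hθ, map_one]; rfl
        rw [← hL, ← hR, ← map_mul, ← map_mul, hcomm a]
      -- general case by linearity
      induction x using TensorProduct.induction_on with
      | zero => simp
      | tmul x y =>
          have hxy : (x ⊗ₜ[R] y) = x • ((1 : A) ⊗ₜ[R] y) := by
            rw [TensorProduct.smul_tmul', smul_eq_mul, mul_one]
          rw [hxy, map_smul, ← TensorProduct.smul_tmul', TensorProduct.tmul_smul,
            smul_mul_assoc, smul_mul_assoc, hgen y]
      | add x y hx hy =>
          rw [map_add, TensorProduct.add_tmul, TensorProduct.tmul_add, add_mul, add_mul,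
            hx, hy]
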